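/- The characteristic identity Π_{k=0}^{r}(Ĉ − c_k·(1⊗1)) = 0 has minimal possible degree: for every j ∈ {0,1,...,r} one has Π_{k=0, k≠j}^{r} ( Ĉ − c_k·(1⊗1) ) ≠ 0 in Cl ⊗ Cl, where c_k := (2k(2r−k) − r(2r−1))/(16(r−1)); equivalently, every eigenvalue c_0, c_1, ..., c_r actually occurs in the spectrum of Ĉ. -/

import Mathlib

open scoped TensorProduct

noncomputable section

/-- The quadratic form `x₁² + ⋯ + x_{2r}²` on `ℂ^{2r}`. -/
def Qf (r : ℕ) : QuadraticForm ℂ (Fin (2*r) → ℂ) :=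
  QuadraticMap.weightedSumSquares ℂ (fun _ : Fin (2*r) => (1:ℂ))

/-- The Clifford algebra of `Qf r`. -/
abbrev Cl (r : ℕ) := CliffordAlgebra (Qf r)

/-- The generators `Γ_i`. -/
def Γgen (r : ℕ) (i : Fin (2*r)) : Cl r :=
  CliffordAlgebra.ι (Qf r) (Pi.single i 1)

/-- The antisymmetrised products `Γ_{[i₁…i_k]}`. -/
def Γbr (r k : ℕ) (i : Fin k → Fin (2*r)) : Cl r :=
  ((k.factorial : ℂ))⁻¹ •
    ∑ σ : Equiv.Perm (Fin k),
      ((Equiv.Perm.sign σ : ℤ) : ℂ) • (List.ofFn fun j => Γgen r (i (σ j))).prod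

/-- The invariants `I_k ∈ Cl ⊗ Cl`. -/
def Ik (r k : ℕ) : Cl r ⊗[ℂ] Cl r :=
  ∑ i : Fin k → Fin (2*r), (Γbr r k i) ⊗ₜ[ℂ] (Γbr r k i)

/-- The split Casimir element `Ĉ = −I₂/(16(2r−2))`. -/
def sC (r : ℕ) : Cl r ⊗[ℂ] Cl r := (-(16*(2*(r:ℂ)-2))⁻¹) • Ik r 2

/-- The top element `Γ_{2r+1} = (−i)^r Γ₁⋯Γ_{2r}`. -/
def Γtop (r : ℕ) : Cl r :=
  ((-Complex.I)^r) • (List.ofFn fun i : Fin (2*r) => Γgen r i).prod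

/-- The chirality projector `p_ε = (1 + ε Γ_{2r+1})/2`. -/
def pCh (r : ℕ) (ε : ℂ) : Cl r := (2:ℂ)⁻¹ • (1 + ε • Γtop r)

/-- The chirality projectors `p_{εε'} = p_ε ⊗ p_{ε'}`. -/
def ppCh (r : ℕ) (ε ε' : ℂ) : Cl r ⊗[ℂ] Cl r := (pCh r ε) ⊗ₜ[ℂ] (pCh r ε')

/-- The eigenvalues `c_k = (2k(2r−k) − r(2r−1))/(16(r−1))`. -/
def cEv (r k : ℕ) : ℂ :=
  (2*(k:ℂ)*(2*(r:ℂ)-(k:ℂ)) - (r:ℂ)*(2*(r:ℂ)-1)) / (16*((r:ℂ)-1))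

/-- The spectral projectors `P_k = Π_{j≠k} (Ĉ − c_j)/(c_k − c_j)`. -/
def Pk (r k : ℕ) : Cl r ⊗[ℂ] Cl r :=
  (((List.range (r+1)).filter (fun j => j ≠ k)).map
    (fun j => (cEv r k - cEv r j)⁻¹ • (sC r - cEv r j • 1))).prod

/-- `P_r^S = (p_{++} + p_{−−})·P_r`. -/
def PrS (r : ℕ) : Cl r ⊗[ℂ] Cl r := (ppCh r 1 1 + ppCh r (-1) (-1)) * Pk r r

/-- The ascending factorial `a_k(u) = (u/2)(u/2+1)⋯(u/2+k−1)`. -/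
def asc (u : ℂ) (k : ℕ) : ℂ := ∏ j ∈ Finset.range k, (u/2 + (j:ℂ))


section Aux

open CliffordAlgebra

lemma gamma_sq (r : ℕ) (i : Fin (2*r)) : Γgen r i * Γgen r i = 1 := by
  rw [Γgen, CliffordAlgebra.ι_sq_scalar]
  have : Qf r (Pi.single i 1) = 1 := by
    simp [Qf, QuadraticMap.weightedSumSquares_apply, Pi.single_apply]
  rw [this, map_one]

lemma gamma_anticomm (r : ℕ) {i j : Fin (2*r)} (h : i ≠ j) :
    Γgen r i * Γgen r j = - (Γgen r j * Γgen r i) := by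
  have horth : (Qf r).IsOrtho (Pi.single i 1) (Pi.single j 1) := by
    rw [QuadraticMap.isOrtho_def]
    have h1 : Qf r (Pi.single i 1 + Pi.single j 1) = 2 := by
      set v : Fin (2*r) → ℂ := Pi.single i 1 + Pi.single j 1 with hv
      rw [Qf, QuadraticMap.weightedSumSquares_apply]
      have : ∀ k, (1:ℂ) • (v k * v k)
          = (if k = i then 1 else 0) + (if k = j then 1 else 0) := by
        intro k
        simp only [hv, Pi.add_apply, Pi.single_apply, one_smul]
        by_cases hk : k = i <;> by_cases hk' : k = j <;> simp_all
      rw [Finset.sum_congr rfl (fun k _ => this k), Finset.sum_add_distrib]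
      simp
      norm_num
    have h2 : Qf r (Pi.single i 1) = 1 := by
      simp [Qf, QuadraticMap.weightedSumSquares_apply, Pi.single_apply]
    have h3 : Qf r (Pi.single j 1) = 1 := by
      simp [Qf, QuadraticMap.weightedSumSquares_apply, Pi.single_apply]
    rw [h1, h2, h3]; ring
  have := CliffordAlgebra.ι_mul_ι_add_swap_of_isOrtho horth
  rw [Γgen, Γgen]
  rw [eq_neg_iff_add_eq_zero]
  exact this

lemma gamma_mul_gamma (r : ℕ) (a c : Fin (2*r)) :
    Γgen r a * Γgen r c = (if a = c then (2:ℂ) else 0) • 1 - Γgen r c * Γgen r a := by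
  by_cases h : a = c
  · subst h; rw [if_pos rfl, gamma_sq]; module
  · rw [if_neg h, gamma_anticomm r h]; simp

/-- right-multiplication by the reverse, as an algebra hom. -/
def rmulRev (r : ℕ) : Cl r →ₐ[ℂ] Module.End ℂ (Cl r) :=
  AlgHom.ofLinearMap
    (((LinearMap.mul ℂ (Cl r)).flip).comp (CliffordAlgebra.reverse (Q := Qf r)))
    (by
      ext x
      simp [CliffordAlgebra.reverse.map_one])
    (by
      intro a b
      ext x
      simp [CliffordAlgebra.reverse.map_mul, mul_assoc])

/-- the representation of `Cl ⊗ Cl` on `Cl`, `a ⊗ b ↦ (x ↦ a * x * reverse b)`. -/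
def rep (r : ℕ) : Cl r ⊗[ℂ] Cl r →ₐ[ℂ] Module.End ℂ (Cl r) :=
  Algebra.TensorProduct.lift (Algebra.lmul ℂ (Cl r)) (rmulRev r)
    (fun a b => by
      show _ * _ = _ * _
      ext x
      simp [rmulRev, Module.End.mul_apply, mul_assoc])

lemma rep_tmul (r : ℕ) (a b x : Cl r) :
    rep r (a ⊗ₜ[ℂ] b) x = a * x * CliffordAlgebra.reverse b := by
  simp [rep, Algebra.TensorProduct.lift_tmul, rmulRev, mul_assoc]

def wl (r : ℕ) (l : List (Fin (2*r))) : Cl r := (l.map (Γgen r)).prod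

@[simp] lemma wl_nil (r : ℕ) : wl r [] = 1 := rfl

lemma wl_cons (r : ℕ) (c : Fin (2*r)) (t : List (Fin (2*r))) :
    wl r (c::t) = Γgen r c * wl r t := by simp [wl]

lemma gamma_comm_wl (r : ℕ) {c : Fin (2*r)} {l : List (Fin (2*r))} (h : c ∉ l) :
    Γgen r c * wl r l = ((-1:ℂ)^l.length) • (wl r l * Γgen r c) := by
  induction l with
  | nil => simp
  | cons b t ih =>
    have hcb : c ≠ b := fun hh => h (hh ▸ List.mem_cons_self)
    have hct : c ∉ t := fun hh => h (List.mem_cons_of_mem b hh)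
    rw [wl_cons, ← mul_assoc, gamma_anticomm r hcb, neg_mul, mul_assoc, ih hct,
      List.length_cons, pow_succ]
    simp [mul_smul_comm, smul_smul, mul_assoc, wl_cons, smul_mul_assoc]

lemma wl_comm_gamma (r : ℕ) {c : Fin (2*r)} {l : List (Fin (2*r))} (h : c ∉ l) :
    wl r l * Γgen r c = ((-1:ℂ)^l.length) • (Γgen r c * wl r l) := by
  rw [gamma_comm_wl r h, smul_smul, ← pow_add]
  have hov : (-1:ℂ)^(l.length + l.length) = 1 := Even.neg_one_pow ⟨l.length, rfl⟩
  rw [hov, one_smul]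

lemma sum_gamma_wl (r : ℕ) {l : List (Fin (2*r))} (h : l.Nodup) :
    ∑ a, Γgen r a * wl r l * Γgen r a
      = (((-1:ℂ)^l.length) * (2*(r:ℂ) - 2*l.length)) • wl r l := by
  induction l with
  | nil =>
    simp only [wl_nil, mul_one, List.length_nil, pow_zero, Nat.cast_zero, one_mul,
      mul_zero, sub_zero]
    rw [Finset.sum_congr rfl (fun (a : Fin (2*r)) _ => gamma_sq r a), Finset.sum_const]
    simp only [Finset.card_univ, Fintype.card_fin]
    rw [← Nat.cast_smul_eq_nsmul ℂ]
    push_cast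
    module
  | cons c t ih =>
    have hct : c ∉ t := (List.nodup_cons.mp h).1
    have ht : t.Nodup := (List.nodup_cons.mp h).2
    have key : ∀ a : Fin (2*r), Γgen r a * wl r (c::t) * Γgen r a
        = (if a = c then (2:ℂ) else 0) • (wl r t * Γgen r a)
          - Γgen r c * (Γgen r a * wl r t * Γgen r a) := by
      intro a
      rw [wl_cons, ← mul_assoc, ← mul_assoc, gamma_mul_gamma]
      simp [sub_mul, smul_mul_assoc, mul_assoc]
    rw [Finset.sum_congr rfl (fun a _ => key a), Finset.sum_sub_distrib]
    simp only [ite_smul, zero_smul, Finset.sum_ite_eq', Finset.mem_univ, if_pos]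
    rw [← Finset.mul_sum, ih ht, wl_comm_gamma r hct]
    rw [wl_cons, List.length_cons]
    set s : ℂ := (-1:ℂ)^t.length with hs
    have hss : s * s = 1 := by
      rw [hs, ← pow_add]
      exact Even.neg_one_pow ⟨t.length, rfl⟩
    rw [mul_smul_comm, pow_succ]
    have hpow : ((-1:ℂ))^(t.length*2) = 1 := Even.neg_one_pow ⟨t.length, by ring⟩
    match_scalars
    all_goals (push_cast; rw [hs]; ring_nf; try simp only [pow_mul, neg_one_sq, one_pow]; try ring)

lemma perm_fin_two : (Finset.univ : Finset (Equiv.Perm (Fin 2)))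
    = {Equiv.refl (Fin 2), Equiv.swap 0 1} := by decide

lemma Γbr_two (r : ℕ) (i : Fin 2 → Fin (2*r)) :
    Γbr r 2 i = Γgen r (i 0) * Γgen r (i 1) - (if i 0 = i 1 then (1:ℂ) else 0) • 1 := by
  rw [Γbr, perm_fin_two]
  rw [Finset.sum_insert (by decide), Finset.sum_singleton]
  simp only [Equiv.Perm.sign_refl, Equiv.Perm.sign_swap (by decide : (0:Fin 2) ≠ 1)]
  simp only [List.ofFn_succ, List.ofFn_zero, List.prod_cons, List.prod_nil]
  simp only [Equiv.refl_apply, Equiv.swap_apply_left, Equiv.swap_apply_right]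
  norm_num
  rw [gamma_mul_gamma r (i 1) (i 0)]
  by_cases h : i 0 = i 1
  · simp [h]
    module
  · simp [h, Ne.symm h]
    module

def Gm (r : ℕ) (a b : Fin (2*r)) : Cl r :=
  Γgen r a * Γgen r b - (if a = b then (1:ℂ) else 0) • 1

lemma reverse_Gm (r : ℕ) (a b : Fin (2*r)) :
    CliffordAlgebra.reverse (Gm r a b) = - Gm r a b := by
  rw [Gm, map_sub, map_smul, CliffordAlgebra.reverse.map_one, Γgen, Γgen,
    CliffordAlgebra.reverse.map_mul, CliffordAlgebra.reverse_ι, CliffordAlgebra.reverse_ι,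
    ← Γgen, ← Γgen, gamma_mul_gamma r b a]
  by_cases h : a = b
  · simp [h]; module
  · simp [h, Ne.symm h]

lemma rep_Ik2 (r : ℕ) (x : Cl r) :
    rep r (Ik r 2) x = - ∑ a, ∑ b, Gm r a b * x * Gm r a b := by
  rw [Ik, map_sum, LinearMap.sum_apply]
  have step : ∀ i : Fin 2 → Fin (2*r),
      rep r (Γbr r 2 i ⊗ₜ[ℂ] Γbr r 2 i) x = - (Gm r (i 0) (i 1) * x * Gm r (i 0) (i 1)) := by
    intro i
    rw [rep_tmul, Γbr_two, ← Gm, reverse_Gm, mul_neg]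
  have conv2 : ∑ i : Fin 2 → Fin (2*r), Gm r (i 0) (i 1) * x * Gm r (i 0) (i 1)
      = ∑ a, ∑ b, Gm r a b * x * Gm r a b :=
    calc ∑ i : Fin 2 → Fin (2*r), Gm r (i 0) (i 1) * x * Gm r (i 0) (i 1)
        = ∑ p : Fin (2*r) × Fin (2*r), Gm r p.1 p.2 * x * Gm r p.1 p.2 :=
          Fintype.sum_equiv (finTwoArrowEquiv (Fin (2*r))) _ _ (fun i => rfl)
      _ = ∑ a, ∑ b, Gm r a b * x * Gm r a b := Fintype.sum_prod_type _
  rw [Finset.sum_congr rfl (fun i _ => step i), Finset.sum_neg_distrib, conv2]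

lemma sum_Gm_wl (r : ℕ) {l : List (Fin (2*r))} (h : l.Nodup) :
    ∑ a, ∑ b, Gm r a b * wl r l * Gm r a b
      = (2*(r:ℂ) - (2*(r:ℂ) - 2*l.length)^2) • wl r l := by
  set x := wl r l with hx
  set lam : ℂ := ((-1:ℂ)^l.length) * (2*(r:ℂ) - 2*l.length) with hlam
  have hsum : ∑ a, Γgen r a * x * Γgen r a = lam • x := sum_gamma_wl r h
  have hlam2 : lam * lam = (2*(r:ℂ) - 2*l.length)^2 := by
    have hp : ((-1:ℂ)^l.length) * ((-1:ℂ)^l.length) = 1 := by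
      rw [← pow_add]; exact Even.neg_one_pow ⟨l.length, rfl⟩
    rw [hlam]
    calc ((-1:ℂ)^l.length * (2*(r:ℂ) - 2*l.length)) * ((-1:ℂ)^l.length * (2*(r:ℂ) - 2*l.length))
        = (((-1:ℂ)^l.length) * ((-1:ℂ)^l.length)) * (2*(r:ℂ) - 2*l.length)^2 := by ring
      _ = (2*(r:ℂ) - 2*l.length)^2 := by rw [hp, one_mul]
  have hE : ∀ a b : Fin (2*r), Gm r a b * x * Gm r a b
      = (if a = b then (1:ℂ) else 0) • (Γgen r a * Γgen r a * x)
        - Γgen r a * (Γgen r b * x * Γgen r b) * Γgen r a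
        - (if a = b then (1:ℂ) else 0) • (x * (Γgen r a * Γgen r a))
        + (if a = b then (1:ℂ) else 0) • x := by
    intro a b
    by_cases hab : a = b
    · subst hab
      have h0 : Gm r a a = 0 := by
        rw [Gm, if_pos rfl, one_smul, gamma_sq, sub_self]
      have h4 : Γgen r a * (Γgen r a * x * Γgen r a) * Γgen r a
          = (Γgen r a * Γgen r a) * x * (Γgen r a * Γgen r a) := by noncomm_ring
      rw [h0, zero_mul, mul_zero, if_pos rfl, one_smul, one_smul, one_smul, h4,
        gamma_sq, one_mul, mul_one]
      abel
    · have hneg : Γgen r a * Γgen r b = -(Γgen r b * Γgen r a) := by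
        rw [gamma_mul_gamma r a b, if_neg hab, zero_smul, zero_sub]
      rw [Gm, if_neg hab]
      simp only [zero_smul, sub_zero, zero_sub, add_zero]
      nth_rewrite 2 [hneg]
      have : Γgen r a * Γgen r b * x * -(Γgen r b * Γgen r a)
          = -(Γgen r a * (Γgen r b * x * Γgen r b) * Γgen r a) := by noncomm_ring
      rw [this]
  have hdel : ∀ (F : Fin (2*r) → Cl r),
      (∑ a, ∑ b, (if a = b then (1:ℂ) else 0) • F a) = ∑ a, F a := by
    intro F
    refine Finset.sum_congr rfl (fun a _ => ?_)
    simp only [ite_smul, zero_smul, one_smul]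
    rw [Finset.sum_ite_eq]
    simp
  have hB : ∑ a, ∑ b, Γgen r a * (Γgen r b * x * Γgen r b) * Γgen r a
      = (lam * lam) • x := by
    have inner : ∀ a : Fin (2*r), ∑ b, Γgen r a * (Γgen r b * x * Γgen r b) * Γgen r a
        = lam • (Γgen r a * x * Γgen r a) := by
      intro a
      rw [← Finset.sum_mul, ← Finset.mul_sum, hsum, mul_smul_comm, smul_mul_assoc]
    rw [Finset.sum_congr rfl (fun a _ => inner a), ← Finset.smul_sum, hsum, smul_smul]
  have hconst : ∀ (y : Cl r), (∑ _a : Fin (2*r), y) = ((2*r : ℕ) : ℂ) • y := by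
    intro y
    rw [Finset.sum_const, Finset.card_univ, Fintype.card_fin, Nat.cast_smul_eq_nsmul]
  rw [Finset.sum_congr rfl (fun a _ => Finset.sum_congr rfl (fun b _ => hE a b))]
  simp only [Finset.sum_add_distrib, Finset.sum_sub_distrib]
  rw [hdel (fun a => Γgen r a * Γgen r a * x), hdel (fun a => x * (Γgen r a * Γgen r a)),
    hdel (fun _ => x), hB]
  have e1 : (∑ a : Fin (2*r), Γgen r a * Γgen r a * x) = ∑ _a : Fin (2*r), x :=
    Finset.sum_congr rfl (fun a _ => by rw [gamma_sq, one_mul])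
  have e2 : (∑ a : Fin (2*r), x * (Γgen r a * Γgen r a)) = ∑ _a : Fin (2*r), x :=
    Finset.sum_congr rfl (fun a _ => by rw [gamma_sq, mul_one])
  rw [e1, e2, hconst, hlam2]
  push_cast
  match_scalars
  ring

lemma rep_sC_wl (r : ℕ) (hr : 2 ≤ r) {l : List (Fin (2*r))} (h : l.Nodup) :
    rep r (sC r) (wl r l) = cEv r l.length • wl r l := by
  have h1 : ((r:ℂ) - 1) ≠ 0 := by
    rw [sub_ne_zero]
    intro hh
    have : r = 1 := by exact_mod_cast hh
    omega
  rw [sC, map_smul, LinearMap.smul_apply, rep_Ik2, sum_Gm_wl r h, smul_neg, smul_smul, cEv]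
  rw [← neg_smul]
  congr 1
  have h2 : (16*(2*(r:ℂ)-2)) ≠ 0 := fun hh => h1 (by linear_combination hh/32)
  have h4 : (16*((r:ℂ)-1)) ≠ 0 := fun hh => h1 (by linear_combination hh/16)
  field_simp
  ring

lemma wl_mul_rev (r : ℕ) (l : List (Fin (2*r))) :
    wl r l * wl r l.reverse = 1 := by
  induction l with
  | nil => simp [wl]
  | cons c t ih =>
    rw [wl_cons, List.reverse_cons]
    have : wl r (t.reverse ++ [c]) = wl r t.reverse * Γgen r c := by
      simp [wl]
    rw [this]
    calc Γgen r c * wl r t * (wl r t.reverse * Γgen r c)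
        = Γgen r c * ((wl r t * wl r t.reverse) * Γgen r c) := by noncomm_ring
      _ = Γgen r c * ((1:Cl r) * Γgen r c) := by rw [ih]
      _ = 1 := by rw [one_mul, gamma_sq]

lemma wl_ne_zero (r : ℕ) (l : List (Fin (2*r))) : wl r l ≠ 0 := by
  haveI : Invertible (2:ℂ) := invertibleOfNonzero two_ne_zero
  intro h0
  have := wl_mul_rev r l
  rw [h0, zero_mul] at this
  exact zero_ne_one this

lemma prod_map_apply (r : ℕ) (L : List ℕ) (f : ℕ → Module.End ℂ (Cl r)) (g : ℕ → ℂ)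
    (x : Cl r) (h : ∀ k ∈ L, f k x = g k • x) :
    (L.map f).prod x = (L.map g).prod • x := by
  induction L with
  | nil => simp
  | cons c t ih =>
    simp only [List.map_cons, List.prod_cons, Module.End.mul_apply]
    rw [ih (fun k hk => h k (List.mem_cons_of_mem c hk)), map_smul,
      h c List.mem_cons_self, smul_smul]
    match_scalars
    ring

end Aux

/-- minimality of the characteristic identity: dropping any factor
gives a nonzero product, i.e. every eigenvalue `c_j`, `0 ≤ j ≤ r`, occurs. -/
theorem sC_char_identity_minimal (r : ℕ) (hr : 2 ≤ r) (j : ℕ) (hj : j ≤ r) :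
    ((((List.range (r+1)).filter (fun k => k ≠ j)).map
        (fun k => sC r - cEv r k • 1)).prod : Cl r ⊗[ℂ] Cl r) ≠ 0 := by
  intro h0
  set L := (List.range (r+1)).filter (fun k => k ≠ j) with hL
  set l : List (Fin (2*r)) := (List.finRange (2*r)).take j with hldef
  have hlnodup : l.Nodup := (List.take_sublist _ _).nodup (List.nodup_finRange _)
  have hllen : l.length = j := by
    rw [hldef, List.length_take, List.length_finRange]
    omega
  set x := wl r l with hxdef
  have hx0 : x ≠ 0 := wl_ne_zero r l
  have h1 : ((r:ℂ) - 1) ≠ 0 := by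
    rw [sub_ne_zero]
    intro hh
    have : r = 1 := by exact_mod_cast hh
    omega
  have h4 : (16*((r:ℂ)-1)) ≠ 0 := fun hh => h1 (by linear_combination hh/16)
  have hfact : ∀ k ∈ L, rep r (sC r - cEv r k • 1) x = (cEv r j - cEv r k) • x := by
    intro k hk
    rw [map_sub, map_smul, map_one, LinearMap.sub_apply, LinearMap.smul_apply,
      Module.End.one_apply, rep_sC_wl r hr hlnodup, hllen, sub_smul]
  have happ : (L.map (fun k => rep r (sC r - cEv r k • 1))).prod x
      = (L.map (fun k => cEv r j - cEv r k)).prod • x :=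
    prod_map_apply r L _ _ x hfact
  have hrep0 : (L.map (fun k => rep r (sC r - cEv r k • 1))).prod = 0 := by
    have h2 := congrArg (rep r) h0
    rw [map_list_prod, map_zero, List.map_map] at h2
    exact h2
  have hzero : (L.map (fun k => cEv r j - cEv r k)).prod • x = 0 := by
    rw [← happ, hrep0]
    rfl
  have hsc : ∀ k ∈ L, cEv r j - cEv r k ≠ 0 := by
    intro k hk
    have hkmem := List.mem_filter.mp hk
    have hkr : k < r + 1 := List.mem_range.mp hkmem.1
    have hkj : k ≠ j := by simpa using hkmem.2
    have key : cEv r j - cEv r k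
        = (2*((j:ℂ)-(k:ℂ))*(2*(r:ℂ)-(j:ℂ)-(k:ℂ))) / (16*((r:ℂ)-1)) := by
      rw [cEv, cEv, div_sub_div _ _ h4 h4, div_eq_div_iff (mul_ne_zero h4 h4) h4]
      ring
    rw [key]
    apply div_ne_zero _ h4
    apply mul_ne_zero (mul_ne_zero two_ne_zero ?_) ?_
    · rw [sub_ne_zero]
      intro hh
      exact hkj (by exact_mod_cast hh.symm)
    · intro hh
      have hnat : ((j + k : ℕ) : ℂ) = ((2*r : ℕ) : ℂ) := by push_cast; linear_combination -hh
      have : j + k = 2*r := by exact_mod_cast hnat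
      omega
  have hprodne : (L.map (fun k => cEv r j - cEv r k)).prod ≠ 0 := by
    apply List.prod_ne_zero
    intro hm
    obtain ⟨k, hk, he⟩ := List.mem_map.mp hm
    exact hsc k hk he
  rcases smul_eq_zero.mp hzero with h | h
  · exact hprodne h
  · exact hx0 h


end
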